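/- There exist infinitely many positive integers N such that N, N + (2*sqrt(N) + 1), and N + 2*(2*sqrt(N) + 1) are all powerful, where N is a perfect square so that sqrt(N) is an integer. Equivalently: there are infinitely many x ≥ 3 such that (x-2)^2, (x-1)^2, and x^2 - 2 are all powerful. -/
import Mathlib


def Powerful (n : ℕ) : Prop :=
  0 < n ∧ ∀ p : ℕ, p.Prime → p ∣ n → p ^ 2 ∣ n

private def pellSeq : ℕ → ℕ × ℕ
  | 0 => (11427, 617)
  | k + 1 =>
      let p := pellSeq k
      (130576328 * p.1 + 2418307437 * p.2, 7050459 * p.1 + 130576328 * p.2)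

private lemma pellSeq_invariant (k : ℕ) :
    (pellSeq k).1 ^ 2 = 343 * (pellSeq k).2 ^ 2 + 2 ∧ 0 < (pellSeq k).2 := by
  induction k with
  | zero => simp [pellSeq]
  | succ k ih =>
    obtain ⟨h1, h2⟩ := ih
    constructor
    · show (130576328 * (pellSeq k).1 + 2418307437 * (pellSeq k).2) ^ 2 =
        343 * (7050459 * (pellSeq k).1 + 130576328 * (pellSeq k).2) ^ 2 + 2
      nlinarith [h1]
    · show 0 < 7050459 * (pellSeq k).1 + 130576328 * (pellSeq k).2
      positivity

private lemma pellSeq_fst_mono : StrictMono (fun k => (pellSeq k).1) := by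
  apply strictMono_nat_of_lt_succ
  intro k
  obtain ⟨h1, h2⟩ := pellSeq_invariant k
  show (pellSeq k).1 < 130576328 * (pellSeq k).1 + 2418307437 * (pellSeq k).2
  nlinarith

private lemma powerful_sq {n : ℕ} (hn : 0 < n) : Powerful (n ^ 2) := by
  refine ⟨by positivity, fun p hp hpd => ?_⟩
  exact pow_dvd_pow_of_dvd (hp.dvd_of_dvd_pow hpd) 2

private lemma powerful_343_sq {v : ℕ} (hv : 0 < v) : Powerful (343 * v ^ 2) := by
  refine ⟨by positivity, fun p hp hpd => ?_⟩
  rcases (Nat.Prime.dvd_mul hp).mp hpd with h | h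
  · have h7 : p = 7 := by
      have : p ∣ 7 ^ 3 := by norm_num at h ⊢; exact h
      exact (Nat.prime_dvd_prime_iff_eq hp (by norm_num)).mp
        (hp.dvd_of_dvd_pow this)
    subst h7
    exact Dvd.dvd.mul_right (by norm_num) _
  · exact Dvd.dvd.mul_left (pow_dvd_pow_of_dvd (hp.dvd_of_dvd_pow h) 2) _

theorem stmt_3 :
    {x : ℕ | 3 ≤ x ∧ Powerful ((x - 2) ^ 2) ∧ Powerful ((x - 1) ^ 2) ∧
      Powerful (x ^ 2 - 2)}.Infinite := by
  refine Set.infinite_of_injective_forall_mem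
    (f := fun k : ℕ => (pellSeq k).1) pellSeq_fst_mono.injective (fun k => ?_)
  obtain ⟨h1, h2⟩ := pellSeq_invariant k
  set x := (pellSeq k).1 with hx
  set v := (pellSeq k).2 with hv
  have hx3 : 3 ≤ x := by nlinarith
  refine ⟨hx3, powerful_sq (n := x - 2) (by omega), powerful_sq (n := x - 1) (by omega), ?_⟩
  have : x ^ 2 - 2 = 343 * v ^ 2 := by omega
  rw [this]
  exact powerful_343_sq h2
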